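/- The association transmission Laplacian Δ of a graph X with association A is self-adjoint with respect to the natural real inner product, and all of its eigenvalues lie in the interval [0, 2]. -/

import Mathlib

open Finset

/-- `N(a,v)`: the number of vertices `b` adjacent to `a` in `X` such that `v`
is an associate of `b`, i.e. `v ∈ 𝒜(b)`. -/
def assocN {V : Type} [Fintype V] [DecidableEq V] (X : SimpleGraph V)
    [DecidableRel X.Adj] (As : V → Finset V) (a v : V) : ℕ :=
  (Finset.univ.filter (fun b => X.Adj a b ∧ v ∈ As b)).card

/-- The association transmission Laplacian, acting on 0-cochains
`K` with `K a ∈ F(𝒜(a))` (represented as functions `V → V → ℝ` supported so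
that `K a v` matters only for `v ∈ 𝒜(a)`):
`(ΔK)(b)(z) = K(b)(z) - Σ_{a ∼ b, z ∈ 𝒜(a)} K(a)(z)/√(N(a,z) N(b,z))`
for `z ∈ 𝒜(b)`, and `0` otherwise. -/
noncomputable def assocLap {V : Type} [Fintype V] [DecidableEq V]
    (X : SimpleGraph V) [DecidableRel X.Adj] (As : V → Finset V)
    (K : V → V → ℝ) : V → V → ℝ := fun b z =>
  if z ∈ As b then
    K b z - ∑ a ∈ Finset.univ.filter (fun a => X.Adj a b ∧ z ∈ As a),
      K a z / Real.sqrt ((assocN X As a z : ℝ) * (assocN X As b z : ℝ))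
  else 0

/-- The 0-cochain `Φ(a)(v) = √(N(a,v))` for `v ∈ 𝒜(a)`. -/
noncomputable def assocPhi {V : Type} [Fintype V] [DecidableEq V]
    (X : SimpleGraph V) [DecidableRel X.Adj] (As : V → Finset V) :
    V → V → ℝ := fun a v =>
  if v ∈ As a then Real.sqrt (assocN X As a v) else 0


section Aux

set_option linter.unusedSectionVars false

lemma sqexp (x y s t ε : ℝ) (hs : s ≠ 0) (ht : t ≠ 0) (hε : ε * ε = 1) :
    (x/s - ε*(y/t))^2 = x*x/(s*s) + y*y/(t*t) - 2*ε*(x*y/(s*t)) := by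
  have hε2 : ε^2 = 1 := by rw [sq]; exact hε
  field_simp
  linear_combination (s^2 * y^2) * hε2

variable {V : Type} [Fintype V] [DecidableEq V] (X : SimpleGraph V)
    [DecidableRel X.Adj] (As : V → Finset V)

def acond (a b z : V) : Prop := X.Adj a b ∧ z ∈ As a ∧ z ∈ As b

instance acond.dec : ∀ a b z, Decidable (acond X As a b z) :=
  fun _ _ _ => instDecidableAnd

lemma acond_symm {a b z : V} (h : acond X As a b z) : acond X As b a z :=
  ⟨h.1.symm, h.2.2, h.2.1⟩

lemma assocN_pos {a b z : V} (h : acond X As a b z) :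
    0 < assocN X As a z := by
  refine Finset.card_pos.mpr ⟨b, ?_⟩
  simp [assocN, Finset.mem_filter, h.1, h.2.2]

noncomputable def aB (K L : V → V → ℝ) : ℝ :=
  ∑ a, ∑ b, ∑ z, if acond X As a b z then
    K a z * L b z /
      Real.sqrt ((assocN X As a z : ℝ) * (assocN X As b z : ℝ)) else 0

lemma aB_symm (K L : V → V → ℝ) : aB X As K L = aB X As L K := by
  unfold aB
  rw [Finset.sum_comm]
  refine Finset.sum_congr rfl fun b _ => Finset.sum_congr rfl fun a _ =>
    Finset.sum_congr rfl fun z _ => ?_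
  by_cases h : acond X As a b z
  · rw [if_pos h, if_pos (acond_symm X As h),
      mul_comm (L b z) (K a z), mul_comm ((assocN X As b z : ℝ))]
  · rw [if_neg h, if_neg (fun h' => h (acond_symm X As h'))]

/-- key expansion of the Laplacian inner product -/
lemma lap_inner (K L : V → V → ℝ) :
    ∑ a, ∑ v ∈ As a, assocLap X As K a v * L a v
      = (∑ a, ∑ v ∈ As a, K a v * L a v) - aB X As K L := by
  have step1 : ∀ b : V, ∑ v ∈ As b, assocLap X As K b v * L b v
      = (∑ v ∈ As b, K b v * L b v)
        - ∑ v ∈ As b, ∑ a ∈ Finset.univ.filter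
            (fun a => X.Adj a b ∧ v ∈ As a),
          (K a v / Real.sqrt ((assocN X As a v : ℝ) * (assocN X As b v : ℝ)))
            * L b v := by
    intro b
    rw [← Finset.sum_sub_distrib]
    refine Finset.sum_congr rfl fun v hv => ?_
    rw [assocLap, if_pos hv, sub_mul, Finset.sum_mul]
  have step2 : ∀ b : V, (∑ v ∈ As b, ∑ a ∈ Finset.univ.filter
            (fun a => X.Adj a b ∧ v ∈ As a),
          (K a v / Real.sqrt ((assocN X As a v : ℝ) * (assocN X As b v : ℝ)))
            * L b v)
      = ∑ a, ∑ z, if acond X As a b z then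
          K a z * L b z /
            Real.sqrt ((assocN X As a z : ℝ) * (assocN X As b z : ℝ))
        else 0 := by
    intro b
    have e1 : ∀ v : V, (∑ a ∈ Finset.univ.filter
            (fun a => X.Adj a b ∧ v ∈ As a),
          (K a v / Real.sqrt ((assocN X As a v : ℝ) * (assocN X As b v : ℝ)))
            * L b v)
        = ∑ a, if X.Adj a b ∧ v ∈ As a then
            K a v * L b v /
              Real.sqrt ((assocN X As a v : ℝ) * (assocN X As b v : ℝ))
          else 0 := by
      intro v
      rw [Finset.sum_filter]
      refine Finset.sum_congr rfl fun a _ => ?_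
      by_cases h : X.Adj a b ∧ v ∈ As a
      · rw [if_pos h, if_pos h, div_mul_eq_mul_div]
      · rw [if_neg h, if_neg h]
    have e2 : ∀ z : V, (if z ∈ As b then (∑ a, if X.Adj a b ∧ z ∈ As a then
            K a z * L b z /
              Real.sqrt ((assocN X As a z : ℝ) * (assocN X As b z : ℝ))
          else 0) else 0)
        = ∑ a, if acond X As a b z then
            K a z * L b z /
              Real.sqrt ((assocN X As a z : ℝ) * (assocN X As b z : ℝ))
          else 0 := by
      intro z
      by_cases hb : z ∈ As b
      · rw [if_pos hb]
        refine Finset.sum_congr rfl fun a _ => ?_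
        by_cases ha : X.Adj a b ∧ z ∈ As a
        · rw [if_pos ha, if_pos ⟨ha.1, ha.2, hb⟩]
        · rw [if_neg ha, if_neg (fun h : acond X As a b z => ha ⟨h.1, h.2.1⟩)]
      · rw [if_neg hb]
        symm
        refine Finset.sum_eq_zero fun a _ =>
          if_neg (fun h : acond X As a b z => hb h.2.2)
    calc (∑ v ∈ As b, ∑ a ∈ Finset.univ.filter
            (fun a => X.Adj a b ∧ v ∈ As a),
          (K a v / Real.sqrt ((assocN X As a v : ℝ) * (assocN X As b v : ℝ)))
            * L b v)
        = ∑ v ∈ As b, ∑ a, if X.Adj a b ∧ v ∈ As a then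
            K a v * L b v /
              Real.sqrt ((assocN X As a v : ℝ) * (assocN X As b v : ℝ))
          else 0 := Finset.sum_congr rfl fun v _ => e1 v
      _ = ∑ v, (if v ∈ As b then (∑ a, if X.Adj a b ∧ v ∈ As a then
            K a v * L b v /
              Real.sqrt ((assocN X As a v : ℝ) * (assocN X As b v : ℝ))
          else 0) else 0) := by
          rw [Finset.sum_ite_mem, Finset.univ_inter]
      _ = ∑ v, ∑ a, if acond X As a b v then
            K a v * L b v /
              Real.sqrt ((assocN X As a v : ℝ) * (assocN X As b v : ℝ))
          else 0 := Finset.sum_congr rfl fun v _ => e2 v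
      _ = _ := Finset.sum_comm
  calc ∑ a, ∑ v ∈ As a, assocLap X As K a v * L a v
      = ∑ b, ((∑ v ∈ As b, K b v * L b v)
          - ∑ a, ∑ z, if acond X As a b z then
              K a z * L b z /
                Real.sqrt ((assocN X As a z : ℝ) * (assocN X As b z : ℝ))
            else 0) := by
        refine Finset.sum_congr rfl fun b _ => ?_
        rw [step1 b, step2 b]
    _ = (∑ a, ∑ v ∈ As a, K a v * L a v) - aB X As K L := by
        rw [Finset.sum_sub_distrib, aB, Finset.sum_comm]

/-- bound |B(K,K)| ≤ Q(K) via sum of squares; ε = ±1 -/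
lemma aB_le (K : V → V → ℝ) (ε : ℝ) (hε : ε * ε = 1) :
    ε * aB X As K K ≤ ∑ a, ∑ v ∈ As a, K a v * K a v := by
  have ea : ∀ (x c : ℝ), c ≠ 0 → x / (c*c) * c = x / c := by
    intro x c hc; field_simp
  set P' : ℝ := ∑ a, ∑ b, ∑ z, if acond X As a b z then
      K b z * K b z / ((assocN X As b z : ℝ) * (assocN X As b z : ℝ))
        * (assocN X As b z : ℝ) else 0 with hP'
  set P : ℝ := ∑ a, ∑ b, ∑ z, if acond X As a b z then
      K a z * K a z / ((assocN X As a z : ℝ) * (assocN X As a z : ℝ))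
        * (assocN X As a z : ℝ) else 0 with hP
  have hPP' : P = P' := by
    rw [hP, hP', Finset.sum_comm]
    refine Finset.sum_congr rfl fun b _ => Finset.sum_congr rfl fun a _ =>
      Finset.sum_congr rfl fun z _ => ?_
    by_cases h : acond X As a b z
    · rw [if_pos h, if_pos (acond_symm X As h)]
    · rw [if_neg h, if_neg (fun h' => h (acond_symm X As h'))]
  have hE : (0:ℝ) ≤ ∑ a, ∑ b, ∑ z, if acond X As a b z then
      (K a z / Real.sqrt (assocN X As a z : ℝ)
        - ε * (K b z / Real.sqrt (assocN X As b z : ℝ)))^2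
    else 0 := by
    refine Finset.sum_nonneg fun a _ => Finset.sum_nonneg fun b _ =>
      Finset.sum_nonneg fun z _ => ?_
    by_cases h : acond X As a b z
    · rw [if_pos h]; positivity
    · rw [if_neg h]
  have hexp : (∑ a, ∑ b, ∑ z, if acond X As a b z then
      (K a z / Real.sqrt (assocN X As a z : ℝ)
        - ε * (K b z / Real.sqrt (assocN X As b z : ℝ)))^2
    else 0) = P + P' - 2 * ε * aB X As K K := by
    rw [hP, hP', aB]
    simp only [Finset.mul_sum]
    rw [← Finset.sum_add_distrib, ← Finset.sum_sub_distrib]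
    refine Finset.sum_congr rfl fun a _ => ?_
    rw [← Finset.sum_add_distrib, ← Finset.sum_sub_distrib]
    refine Finset.sum_congr rfl fun b _ => ?_
    rw [← Finset.sum_add_distrib, ← Finset.sum_sub_distrib]
    refine Finset.sum_congr rfl fun z _ => ?_
    by_cases h : acond X As a b z
    · rw [if_pos h, if_pos h, if_pos h, if_pos h]
      have hna : (0:ℝ) < (assocN X As a z : ℝ) := by
        exact_mod_cast assocN_pos X As h
      have hnb : (0:ℝ) < (assocN X As b z : ℝ) := by
        exact_mod_cast assocN_pos X As (acond_symm X As h)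
      have hsa : Real.sqrt (assocN X As a z : ℝ) ≠ 0 :=
        ne_of_gt (Real.sqrt_pos.mpr hna)
      have hsb : Real.sqrt (assocN X As b z : ℝ) ≠ 0 :=
        ne_of_gt (Real.sqrt_pos.mpr hnb)
      have hsa2 : Real.sqrt (assocN X As a z : ℝ)
          * Real.sqrt (assocN X As a z : ℝ) = (assocN X As a z : ℝ) :=
        Real.mul_self_sqrt hna.le
      have hsb2 : Real.sqrt (assocN X As b z : ℝ)
          * Real.sqrt (assocN X As b z : ℝ) = (assocN X As b z : ℝ) :=
        Real.mul_self_sqrt hnb.le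
      have hsab : Real.sqrt ((assocN X As a z : ℝ) * (assocN X As b z : ℝ))
          = Real.sqrt (assocN X As a z : ℝ)
            * Real.sqrt (assocN X As b z : ℝ) := Real.sqrt_mul hna.le _
      rw [hsab, sqexp _ _ _ _ _ hsa hsb hε, hsa2, hsb2,
        ea _ _ (ne_of_gt hna), ea _ _ (ne_of_gt hnb)]
      try ring
    · rw [if_neg h, if_neg h, if_neg h, if_neg h]; ring
  have hP'le : P' ≤ ∑ a, ∑ v ∈ As a, K a v * K a v := by
    have reord : P' = ∑ b, ∑ z, ∑ a, (if acond X As a b z then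
        K b z * K b z / ((assocN X As b z : ℝ) * (assocN X As b z : ℝ))
          * (assocN X As b z : ℝ) else 0) := by
      rw [hP', Finset.sum_comm]
      exact Finset.sum_congr rfl fun b _ => Finset.sum_comm
    rw [reord]
    have key : ∀ b z : V, (∑ a, if acond X As a b z then
        K b z * K b z / ((assocN X As b z : ℝ) * (assocN X As b z : ℝ))
          * (assocN X As b z : ℝ) else 0)
        ≤ if z ∈ As b then K b z * K b z else 0 := by
      intro b z
      by_cases hb : z ∈ As b
      · rw [if_pos hb]
        have e : (∑ a, if acond X As a b z then
            K b z * K b z / ((assocN X As b z : ℝ) * (assocN X As b z : ℝ))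
              * (assocN X As b z : ℝ) else 0)
            = (assocN X As b z : ℝ)
              * (K b z * K b z
                / ((assocN X As b z : ℝ) * (assocN X As b z : ℝ))
                * (assocN X As b z : ℝ)) := by
          rw [← Finset.sum_filter, Finset.sum_const, nsmul_eq_mul]
          congr 1
          have heq : Finset.univ.filter (fun a => acond X As a b z)
              = Finset.univ.filter (fun c => X.Adj b c ∧ z ∈ As c) := by
            ext a
            simp only [Finset.mem_filter, Finset.mem_univ, true_and]
            constructor
            · rintro ⟨hadj, hza, _⟩; exact ⟨hadj.symm, hza⟩
            · rintro ⟨hadj, hza⟩; exact ⟨hadj.symm, hza, hb⟩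
          rw [heq]; rfl
        rw [e]
        rcases Nat.eq_zero_or_pos (assocN X As b z) with h0 | hpos
        · rw [h0]
          simp [mul_self_nonneg]
        · have hnb : (0:ℝ) < (assocN X As b z : ℝ) := by exact_mod_cast hpos
          have heq2 : (assocN X As b z : ℝ)
              * (K b z * K b z
                / ((assocN X As b z : ℝ) * (assocN X As b z : ℝ))
                * (assocN X As b z : ℝ)) = K b z * K b z := by
            field_simp
          rw [heq2]
      · rw [if_neg hb]
        have hz : ∀ a : V, (if acond X As a b z then
            K b z * K b z / ((assocN X As b z : ℝ) * (assocN X As b z : ℝ))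
              * (assocN X As b z : ℝ)
            else 0) = 0 := fun a =>
          if_neg (fun h : acond X As a b z => hb h.2.2)
        simp [hz]
    calc ∑ b, ∑ z, ∑ a, (if acond X As a b z then
            K b z * K b z / ((assocN X As b z : ℝ) * (assocN X As b z : ℝ))
              * (assocN X As b z : ℝ) else 0)
        ≤ ∑ b, ∑ z, if z ∈ As b then K b z * K b z else 0 :=
          Finset.sum_le_sum fun b _ => Finset.sum_le_sum fun z _ => key b z
      _ = ∑ a, ∑ v ∈ As a, K a v * K a v := by
          refine Finset.sum_congr rfl fun b _ => ?_
          rw [Finset.sum_ite_mem, Finset.univ_inter]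
  nlinarith [hE, hexp, hPP', hP'le]

end Aux

/-- The association transmission Laplacian is self-adjoint with respect to the
natural real inner product `⟨K,L⟩ = Σ_a Σ_{v ∈ 𝒜(a)} K(a)(v) L(a)(v)`, and all
its eigenvalues lie in `[0,2]`. -/
theorem assocLap_selfAdjoint_and_eigenvalues_mem_Icc {V : Type} [Fintype V]
    [DecidableEq V] (X : SimpleGraph V) [DecidableRel X.Adj]
    (As : V → Finset V) :
    (∀ K L : V → V → ℝ, (∀ a v, v ∉ As a → K a v = 0) →
      (∀ a v, v ∉ As a → L a v = 0) →
      ∑ a, ∑ v ∈ As a, assocLap X As K a v * L a v =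
        ∑ a, ∑ v ∈ As a, K a v * assocLap X As L a v) ∧
    (∀ (μ : ℝ) (K : V → V → ℝ), (∀ a v, v ∉ As a → K a v = 0) → K ≠ 0 →
      assocLap X As K = μ • K → 0 ≤ μ ∧ μ ≤ 2) := by
  constructor
  · intro K L hK hL
    have h2 : ∑ a, ∑ v ∈ As a, K a v * assocLap X As L a v
        = ∑ a, ∑ v ∈ As a, assocLap X As L a v * K a v :=
      Finset.sum_congr rfl fun a _ => Finset.sum_congr rfl fun v _ =>
        mul_comm _ _
    rw [h2, lap_inner X As K L, lap_inner X As L K, aB_symm X As L K]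
    congr 1
    exact Finset.sum_congr rfl fun a _ => Finset.sum_congr rfl fun v _ =>
      mul_comm _ _
  · intro μ K hK hK0 heig
    set Q : ℝ := ∑ a, ∑ v ∈ As a, K a v * K a v with hQ
    have hQpos : 0 < Q := by
      have : ∃ a v, K a v ≠ 0 := by
        by_contra hcon
        push_neg at hcon
        exact hK0 (funext fun a => funext fun v => hcon a v)
      obtain ⟨a, v, hav⟩ := this
      have hv : v ∈ As a := by
        by_contra hvn
        exact hav (hK a v hvn)
      have h1 : 0 < K a v * K a v := mul_self_pos.mpr hav
      have h2 : K a v * K a v ≤ ∑ w ∈ As a, K a w * K a w :=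
        Finset.single_le_sum (fun w _ => mul_self_nonneg (K a w)) hv
      have h3 : (∑ w ∈ As a, K a w * K a w) ≤ Q := by
        rw [hQ]
        exact Finset.single_le_sum
          (fun b _ => Finset.sum_nonneg fun w _ => mul_self_nonneg (K b w))
          (Finset.mem_univ a)
      linarith
    have hmain : Q - aB X As K K = μ * Q := by
      have h := lap_inner X As K K
      rw [heig] at h
      rw [hQ, ← h]
      rw [Finset.mul_sum]
      refine Finset.sum_congr rfl fun a _ => ?_
      rw [Finset.mul_sum]
      refine Finset.sum_congr rfl fun v _ => ?_
      simp [Pi.smul_apply, smul_eq_mul, mul_assoc]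
    have hb1 : (1:ℝ) * aB X As K K ≤ Q := aB_le X As K 1 (by norm_num)
    have hb2 : (-1:ℝ) * aB X As K K ≤ Q := aB_le X As K (-1) (by norm_num)
    constructor
    · nlinarith
    · nlinarith
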